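/- Interpret letters over the alphabet {a,b,c,x} as moves on the 2-dimensional integer grid: a = (1,0), b = (0,1), c = (1,1), x = (1,1). Then for any two grid points (p,q) ⪯ (r,s) (i.e., p ≤ r and q ≤ s), there exists exactly one word over {a,b,c} whose moves go from (p,q) to (r,s) and which contains none of ab, ba, ac, bc as a factor. -/
import Mathlib

/-- The 4-letter alphabet {a, b, c, x}. -/
inductive Ltr | a | b | c | x
deriving DecidableEq

/-- The forbidden two-letter factors: ab, ba, ac, bc. -/
def forb : List (List Ltr) := [[.a, .b], [.b, .a], [.a, .c], [.b, .c]]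

/-- `w` avoids all of ab, ba, ac, bc as factors. -/
def Avoids (w : List Ltr) : Prop := ∀ f ∈ forb, ¬ f <:+: w

/-- Moves on the 2-dimensional grid: a = (1,0), b = (0,1), c = (1,1), x = (1,1). -/
def mv : Ltr → ℕ × ℕ
  | .a => (1, 0)
  | .b => (0, 1)
  | .c => (1, 1)
  | .x => (1, 1)

/-- Total displacement of a word. -/
def disp (w : List Ltr) : ℕ × ℕ := (w.map mv).sum

/-- `w` is a word over {a,b,c} whose moves go from `(p,q)` to `(r,s)`. -/
def Connects (p q r s : ℕ) (w : List Ltr) : Prop :=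
  Ltr.x ∉ w ∧ p + (disp w).1 = r ∧ q + (disp w).2 = s

lemma avoids_tail {l : Ltr} {t : List Ltr} (h : Avoids (l :: t)) : Avoids t :=
  fun f hf hinf => h f hf (hinf.trans (List.infix_cons (List.infix_refl _)))

lemma avoids_nil : Avoids [] := by
  intro f hf hinf
  fin_cases hf <;> simpa using hinf.sublist.length_le

lemma avoids_single (l : Ltr) : Avoids [l] := by
  intro f hf hinf
  fin_cases hf <;> simpa using hinf.sublist.length_le

lemma avoids_cons_cons {u v : Ltr} {t : List Ltr} (h1 : [u, v] ∉ forb)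
    (h2 : Avoids (v :: t)) : Avoids (u :: v :: t) := by
  intro f hf hinf
  rcases List.infix_cons_iff.1 hinf with hpre | htl
  · fin_cases hf <;>
    · obtain ⟨e1, hpre⟩ := List.cons_prefix_cons.1 hpre
      obtain ⟨e2, -⟩ := List.cons_prefix_cons.1 hpre
      subst e1; subst e2
      exact h1 (by simp [forb])
  · exact h2 f hf htl

lemma avoids_rep (l : Ltr) (n : ℕ) : Avoids (List.replicate n l) := by
  induction n with
  | zero => exact avoids_nil
  | succ n ih =>
    match n, ih with
    | 0, _ => exact avoids_single l
    | n+1, ih =>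
      rw [List.replicate_succ]
      rw [List.replicate_succ] at ih ⊢
      exact avoids_cons_cons (by cases l <;> simp [forb]) ih

lemma avoids_c_cons {t : List Ltr} (h : Avoids t) : Avoids (Ltr.c :: t) := by
  cases t with
  | nil => exact avoids_single _
  | cons v t => exact avoids_cons_cons (by simp [forb]) h

lemma avoids_rep_c_append {t : List Ltr} (h : Avoids t) (k : ℕ) :
    Avoids (List.replicate k Ltr.c ++ t) := by
  induction k with
  | zero => simpa using h
  | succ k ih => rw [List.replicate_succ, List.cons_append]; exact avoids_c_cons ih

lemma after_a {t : List Ltr} (h : Avoids (Ltr.a :: t)) (hx : Ltr.x ∉ t) :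
    t = List.replicate t.length Ltr.a := by
  induction t with
  | nil => rfl
  | cons y t ih =>
    have hy : y = Ltr.a := by
      cases y
      · rfl
      · exact absurd (h [Ltr.a, Ltr.b] (by simp [forb])
          ⟨[], t, by simp⟩) (by simp)
      · exact absurd (h [Ltr.a, Ltr.c] (by simp [forb])
          ⟨[], t, by simp⟩) (by simp)
      · simp at hx
    subst hy
    have := ih (avoids_tail h) (fun h => hx (List.mem_cons_of_mem _ h))
    simp [List.replicate_succ, ← this]

lemma after_b {t : List Ltr} (h : Avoids (Ltr.b :: t)) (hx : Ltr.x ∉ t) :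
    t = List.replicate t.length Ltr.b := by
  induction t with
  | nil => rfl
  | cons y t ih =>
    have hy : y = Ltr.b := by
      cases y
      · exact absurd (h [Ltr.b, Ltr.a] (by simp [forb])
          ⟨[], t, by simp⟩) (by simp)
      · rfl
      · exact absurd (h [Ltr.b, Ltr.c] (by simp [forb])
          ⟨[], t, by simp⟩) (by simp)
      · simp at hx
    subst hy
    have := ih (avoids_tail h) (fun h => hx (List.mem_cons_of_mem _ h))
    simp [List.replicate_succ, ← this]

lemma struct : ∀ w : List Ltr, Avoids w → Ltr.x ∉ w →
    ∃ k m n : ℕ, (m = 0 ∨ n = 0) ∧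
      w = List.replicate k Ltr.c ++ List.replicate m Ltr.a ++ List.replicate n Ltr.b := by
  intro w
  induction w with
  | nil => exact fun _ _ => ⟨0, 0, 0, Or.inl rfl, rfl⟩
  | cons l t ih =>
    intro h hx
    cases l with
    | a =>
      refine ⟨0, t.length + 1, 0, Or.inr rfl, ?_⟩
      have := after_a h (fun h => hx (List.mem_cons_of_mem _ h))
      simp [List.replicate_succ, ← this]
    | b =>
      refine ⟨0, 0, t.length + 1, Or.inl rfl, ?_⟩
      have := after_b h (fun h => hx (List.mem_cons_of_mem _ h))
      simp [List.replicate_succ, ← this]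
    | c =>
      obtain ⟨k, m, n, hmn, rfl⟩ := ih (avoids_tail h) (fun h => hx (List.mem_cons_of_mem _ h))
      exact ⟨k + 1, m, n, hmn, by simp [List.replicate_succ]⟩
    | x => simp at hx

lemma disp_append (u v : List Ltr) : disp (u ++ v) = disp u + disp v := by
  simp [disp]

lemma disp_rep (l : Ltr) (n : ℕ) : disp (List.replicate n l) = n • (mv l) := by
  simp [disp]

/-- The canonical word. -/
def canon (d e : ℕ) : List Ltr :=
  List.replicate (min d e) Ltr.c ++ List.replicate (d - e) Ltr.a ++ List.replicate (e - d) Ltr.b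

lemma canon_x_notmem (d e : ℕ) : Ltr.x ∉ canon d e := by
  simp [canon, List.mem_replicate]

lemma canon_avoids (d e : ℕ) : Avoids (canon d e) := by
  unfold canon
  rcases le_total d e with h | h
  · rw [Nat.sub_eq_zero_of_le h]
    simpa using avoids_rep_c_append (avoids_rep Ltr.b (e - d)) (min d e)
  · rw [Nat.sub_eq_zero_of_le h]
    simpa using avoids_rep_c_append (avoids_rep Ltr.a (d - e)) (min d e)

lemma disp_triple (k m n : ℕ) :
    disp (List.replicate k Ltr.c ++ List.replicate m Ltr.a ++ List.replicate n Ltr.b)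
      = (k + m, k + n) := by
  simp [disp_append, disp_rep, mv, Prod.ext_iff]

/-- Between any two grid points `(p,q) ⪯ (r,s)` there is exactly one word over
{a,b,c} going from `(p,q)` to `(r,s)` that avoids the factors ab, ba, ac, bc. -/
theorem unique_avoiding_path (p q r s : ℕ) (hp : p ≤ r) (hq : q ≤ s) :
    ∃! w : List Ltr, Connects p q r s w ∧ Avoids w := by
  refine ⟨canon (r - p) (s - q), ⟨⟨canon_x_notmem _ _, ?_, ?_⟩, canon_avoids _ _⟩, ?_⟩
  · have := disp_triple (min (r - p) (s - q)) ((r - p) - (s - q)) ((s - q) - (r - p))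
    rw [canon, this]; omega
  · have := disp_triple (min (r - p) (s - q)) ((r - p) - (s - q)) ((s - q) - (r - p))
    rw [canon, this]; omega
  · rintro w ⟨⟨hx, h1, h2⟩, hav⟩
    obtain ⟨k, m, n, hmn, rfl⟩ := struct w hav hx
    rw [disp_triple] at h1 h2
    unfold canon
    have hk : k = min (r - p) (s - q) := by omega
    have hm : m = (r - p) - (s - q) := by omega
    have hn : n = (s - q) - (r - p) := by omega
    rw [hk, hm, hn]
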